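/- Every two-qubit orthogonal product basis is, up to local unitaries and swap of the two qubits, of the form {|0⟩⊗|b⟩, |0⟩⊗|b'⟩, |1⟩⊗|c⟩, |1⟩⊗|c'⟩}, where {|b⟩,|b'⟩} and {|c⟩,|c'⟩} are orthonormal bases of ℂ². -/

import Mathlib

open scoped ComplexInnerProductSpace Matrix
noncomputable section
/-- A qubit state space `ℂ²`. -/
abbrev Qubit := EuclideanSpace ℂ (Fin 2)
/-- The standard basis vector `|0⟩`. -/
def e0 : Qubit := EuclideanSpace.single 0 1
/-- The standard basis vector `|1⟩`. -/
def e1 : Qubit := EuclideanSpace.single 1 1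
/-- `OB a a'` means `{a, a'}` is an orthonormal basis of `ℂ²`. -/
def OB (a a' : Qubit) : Prop := ⟪a, a⟫ = 1 ∧ ⟪a', a'⟫ = 1 ∧ ⟪a, a'⟫ = 0
/-- The two-qubit product state `a ⊗ b`. -/
def prod2 (a b : Qubit) : EuclideanSpace ℂ (Fin 2 × Fin 2) := WithLp.toLp 2 (fun p : Fin 2 × Fin 2 => a p.1 * b p.2)
/-- The three-qubit product state `a ⊗ b ⊗ c`. -/
def prod3 (a b c : Qubit) : EuclideanSpace ℂ (Fin 2 × Fin 2 × Fin 2) :=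
  WithLp.toLp 2 (fun p : Fin 2 × Fin 2 × Fin 2 => a p.1 * b p.2.1 * c p.2.2)
/-- The four-qubit product state `a ⊗ b ⊗ c ⊗ d`. -/
def prod4 (a b c d : Qubit) : EuclideanSpace ℂ (Fin 2 × Fin 2 × Fin 2 × Fin 2) :=
  WithLp.toLp 2 (fun p : Fin 2 × Fin 2 × Fin 2 × Fin 2 => a p.1 * b p.2.1 * c p.2.2.1 * d p.2.2.2)
/-- Apply a `2 × 2` matrix to a qubit state. -/
def appM (A : Matrix (Fin 2) (Fin 2) ℂ) (v : Qubit) : Qubit := WithLp.toLp 2 (fun i => ∑ j, A i j * v j)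

/-- Apply the local unitary `U ⊗ V` to a two-qubit state. -/
def act2 (U V : Matrix (Fin 2) (Fin 2) ℂ) (w : EuclideanSpace ℂ (Fin 2 × Fin 2)) :
    EuclideanSpace ℂ (Fin 2 × Fin 2) :=
  WithLp.toLp 2 (fun p : Fin 2 × Fin 2 => ∑ q : Fin 2 × Fin 2, U p.1 q.1 * V p.2 q.2 * w q)
/-- Possibly swap the two qubits. -/
def maybeSwap (s : Bool) (w : EuclideanSpace ℂ (Fin 2 × Fin 2)) :
    EuclideanSpace ℂ (Fin 2 × Fin 2) :=
  if s then WithLp.toLp 2 (fun p : Fin 2 × Fin 2 => w (p.2, p.1)) else w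
/-- The standard-form two-qubit OPB `{|0⟩⊗|b⟩, |0⟩⊗|b'⟩, |1⟩⊗|c⟩, |1⟩⊗|c'⟩}`. -/
def stdOPB (b b' c c' : Qubit) : Fin 4 → EuclideanSpace ℂ (Fin 2 × Fin 2) :=
  ![prod2 e0 b, prod2 e0 b', prod2 e1 c, prod2 e1 c']

lemma inner_q (x y : Qubit) : ⟪x, y⟫ = (starRingEnd ℂ) (x 0) * y 0 + (starRingEnd ℂ) (x 1) * y 1 := by
  simp [PiLp.inner_apply, RCLike.inner_apply, Fin.sum_univ_two]; ring

lemma qubit_ext (x y : Qubit) (h0 : x 0 = y 0) (h1 : x 1 = y 1) : x = y := by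
  ext i; fin_cases i <;> assumption

lemma qubit_ne_zero (x : Qubit) (hx : x ≠ 0) : x 0 ≠ 0 ∨ x 1 ≠ 0 := by
  by_contra h
  push_neg at h
  exact hx (qubit_ext x 0 h.1 h.2)

lemma smul_q (c : ℂ) (x : Qubit) (i : Fin 2) : (c • x) i = c * x i := rfl

lemma prop_of_perp (u v w : Qubit) (hu : u ≠ 0) (hv : v ≠ 0) (hw : w ≠ 0)
    (huv : ⟪u, v⟫ = 0) (huw : ⟪u, w⟫ = 0) : ∃ c : ℂ, c ≠ 0 ∧ w = c • v := by
  rw [inner_q] at huv huw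
  set a := (starRingEnd ℂ) (u 0) with ha
  set b := (starRingEnd ℂ) (u 1) with hb
  have hdet : v 0 * w 1 = v 1 * w 0 := by
    rcases qubit_ne_zero u hu with h | h
    · have ha0 : a ≠ 0 := by simpa [ha] using h
      have h2 : a * (v 0 * w 1 - v 1 * w 0) = 0 := by linear_combination w 1 * huv - v 1 * huw
      rcases mul_eq_zero.mp h2 with h' | h'
      · exact absurd h' ha0
      · linear_combination h'
    · have hb0 : b ≠ 0 := by simpa [hb] using h
      have h2 : b * (v 0 * w 1 - v 1 * w 0) = 0 := by linear_combination v 0 * huw - w 0 * huv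
      rcases mul_eq_zero.mp h2 with h' | h'
      · exact absurd h' hb0
      · linear_combination h'
  rcases qubit_ne_zero v hv with h | h
  · refine ⟨w 0 / v 0, ?_, ?_⟩
    · intro hc
      have hw0 : w 0 = 0 := by
        field_simp at hc; simpa using hc
      have hw1 : w 1 = 0 := by
        rw [hw0, mul_zero] at hdet
        rcases mul_eq_zero.mp hdet with h' | h'
        · exact absurd h' h
        · exact h'
      exact hw (qubit_ext w 0 hw0 hw1)
    · refine qubit_ext _ _ ?_ ?_
      · rw [smul_q]; field_simp
      · rw [smul_q, div_mul_eq_mul_div, eq_div_iff h]; linear_combination hdet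
  · refine ⟨w 1 / v 1, ?_, ?_⟩
    · intro hc
      have hw1 : w 1 = 0 := by field_simp at hc; simpa using hc
      have hw0 : w 0 = 0 := by
        rw [hw1] at hdet
        have : v 1 * w 0 = 0 := by linear_combination -hdet
        rcases mul_eq_zero.mp this with h' | h'
        · exact absurd h' h
        · exact h'
      exact hw (qubit_ext w 0 hw0 hw1)
    · refine qubit_ext _ _ ?_ ?_
      · rw [smul_q, div_mul_eq_mul_div, eq_div_iff h]
        linear_combination -hdet
      · rw [smul_q]; field_simp

lemma span2 (u v w : Qubit) (hu : u ≠ 0) (hv : v ≠ 0) (huv : ⟪u, v⟫ = 0)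
    (h1 : ⟪u, w⟫ = 0) (h2 : ⟪v, w⟫ = 0) : w = 0 := by
  by_contra hw
  obtain ⟨c, hc, rfl⟩ := prop_of_perp u v w hu hv hw huv h1
  rw [inner_smul_right] at h2
  rcases mul_eq_zero.mp h2 with h' | h'
  · exact hc h'
  · exact (inner_self_ne_zero.mpr hv) h'

def matOf (f g : Qubit) : Matrix (Fin 2) (Fin 2) ℂ :=
  Matrix.of fun i j => if i = 0 then (starRingEnd ℂ) (f j) else (starRingEnd ℂ) (g j)

lemma matOf_unitary (f g : Qubit) (h : OB f g) : (matOf f g)ᴴ * (matOf f g) = 1 := by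
  rw [mul_eq_one_comm]
  obtain ⟨h1, h2, h3⟩ := h
  rw [inner_q] at h1 h2 h3
  have h3' := congrArg (starRingEnd ℂ) h3
  simp only [map_add, map_mul, RingHomCompTriple.comp_apply, RingHom.id_apply, map_zero,
    Complex.conj_conj] at h3'
  ext i j
  fin_cases i <;> fin_cases j <;>
    simp [matOf, Matrix.mul_apply, Matrix.conjTranspose_apply, Fin.sum_univ_two,
      Matrix.one_apply] <;>
    first
    | (linear_combination h1) | (linear_combination h2) | (linear_combination h3)
      | (linear_combination h3')

def nmz (v : Qubit) : Qubit := ((‖v‖ : ℂ)⁻¹) • v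

lemma inner_self_q (x : Qubit) : ⟪x, x⟫ = (‖x‖:ℂ)^2 := by
  exact_mod_cast inner_self_eq_norm_sq_to_K x

lemma nmz_inner_left (v w : Qubit) : ⟪nmz v, w⟫ = (‖v‖:ℂ)⁻¹ * ⟪v, w⟫ := by
  rw [nmz, inner_smul_left]
  norm_num

lemma nmz_inner_right (v w : Qubit) : ⟪v, nmz w⟫ = (‖w‖:ℂ)⁻¹ * ⟪v, w⟫ := by
  rw [nmz, inner_smul_right]

lemma nmz_self (v : Qubit) (hv : v ≠ 0) : ⟪nmz v, nmz v⟫ = 1 := by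
  rw [nmz_inner_left, nmz_inner_right, inner_self_q]
  have : (‖v‖:ℂ) ≠ 0 := by simpa using norm_ne_zero_iff.mpr hv
  field_simp

lemma smul_nmz (v : Qubit) (hv : v ≠ 0) : v = (‖v‖:ℂ) • nmz v := by
  rw [nmz, smul_smul]
  have : (‖v‖:ℂ) ≠ 0 := by simpa using norm_ne_zero_iff.mpr hv
  rw [mul_inv_cancel₀ this, one_smul]

lemma appM_matOf (f g v : Qubit) :
    appM (matOf f g) v = ⟪f, v⟫ • e0 + ⟪g, v⟫ • e1 := by
  ext i
  fin_cases i <;>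
    simp [appM, matOf, inner_q, e0, e1, Fin.sum_univ_two, EuclideanSpace.single_apply,
      PiLp.add_apply, PiLp.smul_apply, smul_eq_mul]

lemma appM_smul (A : Matrix (Fin 2) (Fin 2) ℂ) (c : ℂ) (v : Qubit) :
    appM A (c • v) = c • appM A v := by
  ext i
  simp [appM, PiLp.smul_apply, smul_eq_mul, Finset.mul_sum]
  ring_nf

lemma prod2_smul_smul (a b : ℂ) (x y : Qubit) :
    prod2 (a • x) (b • y) = (a * b) • prod2 x y := by
  ext p
  simp only [prod2, PiLp.smul_apply, smul_eq_mul]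
  ring

lemma norm_c_ne (v : Qubit) (hv : v ≠ 0) : (‖v‖:ℂ) ≠ 0 := by
  simpa using norm_ne_zero_iff.mpr hv

lemma OB_nmz (x y : Qubit) (hx : x ≠ 0) (hy : y ≠ 0) (hxy : ⟪x, y⟫ = 0) :
    OB (nmz x) (nmz y) := by
  refine ⟨nmz_self x hx, nmz_self y hy, ?_⟩
  rw [nmz_inner_left, nmz_inner_right, hxy]
  ring

lemma core (x y : Fin 4 → Qubit) (hx : ∀ j, x j ≠ 0) (hy : ∀ j, y j ≠ 0)
    (ho : ∀ j k, j ≠ k → ⟪x j, x k⟫ * ⟪y j, y k⟫ = 0)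
    (h2 : ⟪y 0, y 2⟫ = 0) (h3 : ⟪y 0, y 3⟫ = 0) :
    ∃ M : Matrix (Fin 2) (Fin 2) ℂ, Mᴴ * M = 1 ∧
      ∃ b b' c c' : Qubit, OB b b' ∧ OB c c' ∧
        ∃ γ : Fin 4 → ℂ, (∀ j, γ j ≠ 0) ∧
          ∀ j, prod2 (appM M (y j)) (x j) = γ j • stdOPB b b' c c' j := by
  obtain ⟨cc, hcc, hy3⟩ := prop_of_perp (y 0) (y 2) (y 3) (hy 0) (hy 2) (hy 3) h2 h3
  have hy23 : ⟪y 2, y 3⟫ ≠ 0 := by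
    rw [hy3, inner_smul_right]
    exact mul_ne_zero hcc (inner_self_ne_zero.mpr (hy 2))
  have hx23 : ⟪x 2, x 3⟫ = 0 := by
    rcases mul_eq_zero.mp (ho 2 3 (by decide)) with h | h
    · exact h
    · exact absurd h hy23
  have hy12 : ⟪y 1, y 2⟫ = 0 := by
    by_contra h
    have hy13 : ⟪y 1, y 3⟫ ≠ 0 := by
      rw [hy3, inner_smul_right]
      exact mul_ne_zero hcc h
    have hx12 : ⟪x 1, x 2⟫ = 0 := by
      rcases mul_eq_zero.mp (ho 1 2 (by decide)) with h' | h'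
      · exact h'
      · exact absurd h' h
    have hx13 : ⟪x 1, x 3⟫ = 0 := by
      rcases mul_eq_zero.mp (ho 1 3 (by decide)) with h' | h'
      · exact h'
      · exact absurd h' hy13
    exact hx 1 (span2 (x 2) (x 3) (x 1) (hx 2) (hx 3) hx23
      (inner_eq_zero_symm.mp hx12) (inner_eq_zero_symm.mp hx13))
  obtain ⟨d, hd, hy1⟩ := prop_of_perp (y 2) (y 0) (y 1) (hy 2) (hy 0) (hy 1)
    (inner_eq_zero_symm.mp h2) (inner_eq_zero_symm.mp hy12)
  have hy01 : ⟪y 0, y 1⟫ ≠ 0 := by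
    rw [hy1, inner_smul_right]
    exact mul_ne_zero hd (inner_self_ne_zero.mpr (hy 0))
  have hx01 : ⟪x 0, x 1⟫ = 0 := by
    rcases mul_eq_zero.mp (ho 0 1 (by decide)) with h | h
    · exact h
    · exact absurd h hy01
  -- build the unitary
  set f := nmz (y 0) with hf
  set g := nmz (y 2) with hg
  have hfg : OB f g := OB_nmz _ _ (hy 0) (hy 2) h2
  refine ⟨matOf f g, matOf_unitary f g hfg, nmz (x 0), nmz (x 1), nmz (x 2), nmz (x 3),
    OB_nmz _ _ (hx 0) (hx 1) hx01, OB_nmz _ _ (hx 2) (hx 3) hx23,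
    ![⟪f, y 0⟫ * ‖x 0‖, d * ⟪f, y 0⟫ * ‖x 1‖, ⟪g, y 2⟫ * ‖x 2‖, cc * ⟪g, y 2⟫ * ‖x 3‖],
    ?_, ?_⟩
  · have hfy0 : ⟪f, y 0⟫ ≠ 0 := by
      rw [hf, nmz_inner_left]
      exact mul_ne_zero (inv_ne_zero (norm_c_ne _ (hy 0))) (inner_self_ne_zero.mpr (hy 0))
    have hgy2 : ⟪g, y 2⟫ ≠ 0 := by
      rw [hg, nmz_inner_left]
      exact mul_ne_zero (inv_ne_zero (norm_c_ne _ (hy 2))) (inner_self_ne_zero.mpr (hy 2))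
    intro j
    fin_cases j <;>
      simp only [Matrix.cons_val_zero, Matrix.cons_val_one, Matrix.head_cons, Fin.mk_one,
        Matrix.cons_val_two, Matrix.tail_cons, Matrix.cons_val_three] <;>
      first
      | exact mul_ne_zero hfy0 (norm_c_ne _ (hx 0))
      | exact mul_ne_zero (mul_ne_zero hd hfy0) (norm_c_ne _ (hx 1))
      | exact mul_ne_zero hgy2 (norm_c_ne _ (hx 2))
      | exact mul_ne_zero (mul_ne_zero hcc hgy2) (norm_c_ne _ (hx 3))
  · have hgy0 : ⟪g, y 0⟫ = 0 := by
      rw [hg, nmz_inner_left, inner_eq_zero_symm.mp h2, mul_zero]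
    have hfy2 : ⟪f, y 2⟫ = 0 := by
      rw [hf, nmz_inner_left, h2, mul_zero]
    have hM0 : appM (matOf f g) (y 0) = ⟪f, y 0⟫ • e0 := by
      rw [appM_matOf, hgy0, zero_smul, add_zero]
    have hM2 : appM (matOf f g) (y 2) = ⟪g, y 2⟫ • e1 := by
      rw [appM_matOf, hfy2, zero_smul, zero_add]
    intro j
    fin_cases j
    · show prod2 (appM (matOf f g) (y 0)) (x 0) = _
      rw [hM0]
      nth_rewrite 1 [smul_nmz (x 0) (hx 0)]
      rw [prod2_smul_smul]
      rfl
    · show prod2 (appM (matOf f g) (y 1)) (x 1) = _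
      rw [hy1, appM_smul, hM0, smul_smul]
      nth_rewrite 1 [smul_nmz (x 1) (hx 1)]
      rw [prod2_smul_smul]
      simp only [stdOPB]
      norm_num [mul_assoc]
    · show prod2 (appM (matOf f g) (y 2)) (x 2) = _
      rw [hM2]
      nth_rewrite 1 [smul_nmz (x 2) (hx 2)]
      rw [prod2_smul_smul]
      rfl
    · show prod2 (appM (matOf f g) (y 3)) (x 3) = _
      rw [hy3, appM_smul, hM2, smul_smul]
      nth_rewrite 1 [smul_nmz (x 3) (hx 3)]
      rw [prod2_smul_smul]
      simp only [stdOPB]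
      norm_num [mul_assoc]

lemma act2_prod2 (U V : Matrix (Fin 2) (Fin 2) ℂ) (u v : Qubit) :
    act2 U V (prod2 u v) = prod2 (appM U u) (appM V v) := by
  ext p
  simp [act2, prod2, appM, Fintype.sum_prod_type, Fin.sum_univ_two]
  ring

lemma appM_one (v : Qubit) : appM 1 v = v := by
  ext i
  simp [appM, Matrix.one_apply]

lemma maybeSwap_prod2 (a b : Qubit) : maybeSwap true (prod2 a b) = prod2 b a := by
  ext p
  simp [maybeSwap, prod2, mul_comm]

lemma inner_prod2 (u v u' v' : Qubit) : ⟪prod2 u v, prod2 u' v'⟫ = ⟪u, u'⟫ * ⟪v, v'⟫ := by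
  simp [PiLp.inner_apply, RCLike.inner_apply, prod2, Fintype.sum_prod_type, Fin.sum_univ_two]
  ring

def pA : Fin 4 ≃ Fin 4 := ⟨![0,2,1,3], ![0,2,1,3], by decide, by decide⟩

def pB : Fin 4 ≃ Fin 4 := ⟨![0,3,1,2], ![0,2,3,1], by decide, by decide⟩

lemma finishT (S : Fin 4 → EuclideanSpace ℂ (Fin 2 × Fin 2)) (u v : Fin 4 → Qubit)
    (hS : ∀ j, S j = prod2 (u j) (v j)) (σ : Fin 4 ≃ Fin 4)
    (M : Matrix (Fin 2) (Fin 2) ℂ) (hM : Mᴴ * M = 1) (b b' c c' : Qubit)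
    (hbb : OB b b') (hcc : OB c c') (γ : Fin 4 → ℂ) (hγ : ∀ j, γ j ≠ 0)
    (hcore : ∀ j, prod2 (appM M (v (σ j))) (u (σ j)) = γ j • stdOPB b b' c c' j) :
    ∃ U V : Matrix (Fin 2) (Fin 2) ℂ, Uᴴ * U = 1 ∧ Vᴴ * V = 1 ∧
      ∃ (sw : Bool) (b b' c c' : Qubit), OB b b' ∧ OB c c' ∧
        ∃ (π : Fin 4 ≃ Fin 4) (γ : Fin 4 → ℂ), (∀ j, γ j ≠ 0) ∧
          ∀ j, maybeSwap sw (act2 U V (S j)) = γ j • stdOPB b b' c c' (π j) := by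
  refine ⟨1, M, by simp, hM, true, b, b', c, c', hbb, hcc, σ.symm, fun j => γ (σ.symm j),
    fun j => hγ _, ?_⟩
  intro j
  have h := hcore (σ.symm j)
  rw [Equiv.apply_symm_apply] at h
  rw [hS j, act2_prod2, appM_one, maybeSwap_prod2]
  exact h

lemma finishF (S : Fin 4 → EuclideanSpace ℂ (Fin 2 × Fin 2)) (u v : Fin 4 → Qubit)
    (hS : ∀ j, S j = prod2 (u j) (v j)) (σ : Fin 4 ≃ Fin 4)
    (M : Matrix (Fin 2) (Fin 2) ℂ) (hM : Mᴴ * M = 1) (b b' c c' : Qubit)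
    (hbb : OB b b') (hcc : OB c c') (γ : Fin 4 → ℂ) (hγ : ∀ j, γ j ≠ 0)
    (hcore : ∀ j, prod2 (appM M (u (σ j))) (v (σ j)) = γ j • stdOPB b b' c c' j) :
    ∃ U V : Matrix (Fin 2) (Fin 2) ℂ, Uᴴ * U = 1 ∧ Vᴴ * V = 1 ∧
      ∃ (sw : Bool) (b b' c c' : Qubit), OB b b' ∧ OB c c' ∧
        ∃ (π : Fin 4 ≃ Fin 4) (γ : Fin 4 → ℂ), (∀ j, γ j ≠ 0) ∧
          ∀ j, maybeSwap sw (act2 U V (S j)) = γ j • stdOPB b b' c c' (π j) := by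
  refine ⟨M, 1, hM, by simp, false, b, b', c, c', hbb, hcc, σ.symm, fun j => γ (σ.symm j),
    fun j => hγ _, ?_⟩
  intro j
  have h := hcore (σ.symm j)
  rw [Equiv.apply_symm_apply] at h
  rw [hS j, act2_prod2, appM_one]
  simpa [maybeSwap] using h

/-- Every two-qubit OPB is, up to local unitaries and a possible swap of
the two qubits (and relabeling / rescaling by nonzero scalars), of the standard form
`{|0⟩⊗|b⟩, |0⟩⊗|b'⟩, |1⟩⊗|c⟩, |1⟩⊗|c'⟩}` with `{b,b'}`, `{c,c'}` orthonormal bases. -/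
theorem two_qubit_OPB_standard_form
    (S : Fin 4 → EuclideanSpace ℂ (Fin 2 × Fin 2))
    (hprod : ∀ j, ∃ u v : Qubit, u ≠ 0 ∧ v ≠ 0 ∧ S j = prod2 u v)
    (horth : ∀ j k, j ≠ k → ⟪S j, S k⟫ = 0)
    (hspan : Submodule.span ℂ (Set.range S) = ⊤) :
    ∃ U V : Matrix (Fin 2) (Fin 2) ℂ, Uᴴ * U = 1 ∧ Vᴴ * V = 1 ∧
      ∃ (sw : Bool) (b b' c c' : Qubit), OB b b' ∧ OB c c' ∧
        ∃ (π : Fin 4 ≃ Fin 4) (γ : Fin 4 → ℂ), (∀ j, γ j ≠ 0) ∧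
          ∀ j, maybeSwap sw (act2 U V (S j)) = γ j • stdOPB b b' c c' (π j) := by
  choose u v hu hv hS using hprod
  have hinn : ∀ j k, j ≠ k → ⟪u j, u k⟫ * ⟪v j, v k⟫ = 0 := by
    intro j k hjk
    have h := horth j k hjk
    rwa [hS j, hS k, inner_prod2] at h
  have hinn' : ∀ j k, j ≠ k → ⟪v j, v k⟫ * ⟪u j, u k⟫ = 0 := fun j k hjk => by
    rw [mul_comm]; exact hinn j k hjk
  by_cases hP1 : ⟪v 0, v 1⟫ = 0 <;> by_cases hP2 : ⟪v 0, v 2⟫ = 0 <;>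
    by_cases hP3 : ⟪v 0, v 3⟫ = 0
  · obtain ⟨M, hM, b, b', c, c', hbb, hcc, γ, hγ, hc⟩ :=
      core (fun j => u (pB j)) (fun j => v (pB j)) (fun j => hu _) (fun j => hv _)
        (fun j k hjk => hinn _ _ (pB.injective.ne hjk)) hP1 hP2
    exact finishT S u v hS pB M hM b b' c c' hbb hcc γ hγ hc
  · obtain ⟨M, hM, b, b', c, c', hbb, hcc, γ, hγ, hc⟩ :=
      core (fun j => u (pB j)) (fun j => v (pB j)) (fun j => hu _) (fun j => hv _)
        (fun j k hjk => hinn _ _ (pB.injective.ne hjk)) hP1 hP2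
    exact finishT S u v hS pB M hM b b' c c' hbb hcc γ hγ hc
  · obtain ⟨M, hM, b, b', c, c', hbb, hcc, γ, hγ, hc⟩ :=
      core (fun j => u (pA j)) (fun j => v (pA j)) (fun j => hu _) (fun j => hv _)
        (fun j k hjk => hinn _ _ (pA.injective.ne hjk)) hP1 hP3
    exact finishT S u v hS pA M hM b b' c c' hbb hcc γ hγ hc
  · have hu02 : ⟪u 0, u 2⟫ = 0 := (mul_eq_zero.mp (hinn 0 2 (by decide))).resolve_right hP2
    have hu03 : ⟪u 0, u 3⟫ = 0 := (mul_eq_zero.mp (hinn 0 3 (by decide))).resolve_right hP3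
    obtain ⟨M, hM, b, b', c, c', hbb, hcc, γ, hγ, hc⟩ :=
      core (fun j => v j) (fun j => u j) (fun j => hv _) (fun j => hu _)
        (fun j k hjk => hinn' _ _ hjk) hu02 hu03
    exact finishF S u v hS (Equiv.refl _) M hM b b' c c' hbb hcc γ hγ hc
  · obtain ⟨M, hM, b, b', c, c', hbb, hcc, γ, hγ, hc⟩ :=
      core (fun j => u j) (fun j => v j) (fun j => hu _) (fun j => hv _)
        (fun j k hjk => hinn _ _ hjk) hP2 hP3
    exact finishT S u v hS (Equiv.refl _) M hM b b' c c' hbb hcc γ hγ hc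
  · have hu01 : ⟪u 0, u 1⟫ = 0 := (mul_eq_zero.mp (hinn 0 1 (by decide))).resolve_right hP1
    have hu03 : ⟪u 0, u 3⟫ = 0 := (mul_eq_zero.mp (hinn 0 3 (by decide))).resolve_right hP3
    obtain ⟨M, hM, b, b', c, c', hbb, hcc, γ, hγ, hc⟩ :=
      core (fun j => v (pA j)) (fun j => u (pA j)) (fun j => hv _) (fun j => hu _)
        (fun j k hjk => hinn' _ _ (pA.injective.ne hjk)) hu01 hu03
    exact finishF S u v hS pA M hM b b' c c' hbb hcc γ hγ hc
  · have hu01 : ⟪u 0, u 1⟫ = 0 := (mul_eq_zero.mp (hinn 0 1 (by decide))).resolve_right hP1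
    have hu02 : ⟪u 0, u 2⟫ = 0 := (mul_eq_zero.mp (hinn 0 2 (by decide))).resolve_right hP2
    obtain ⟨M, hM, b, b', c, c', hbb, hcc, γ, hγ, hc⟩ :=
      core (fun j => v (pB j)) (fun j => u (pB j)) (fun j => hv _) (fun j => hu _)
        (fun j k hjk => hinn' _ _ (pB.injective.ne hjk)) hu01 hu02
    exact finishF S u v hS pB M hM b b' c c' hbb hcc γ hγ hc
  · have hu01 : ⟪u 0, u 1⟫ = 0 := (mul_eq_zero.mp (hinn 0 1 (by decide))).resolve_right hP1
    have hu02 : ⟪u 0, u 2⟫ = 0 := (mul_eq_zero.mp (hinn 0 2 (by decide))).resolve_right hP2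
    obtain ⟨M, hM, b, b', c, c', hbb, hcc, γ, hγ, hc⟩ :=
      core (fun j => v (pB j)) (fun j => u (pB j)) (fun j => hv _) (fun j => hu _)
        (fun j k hjk => hinn' _ _ (pB.injective.ne hjk)) hu01 hu02
    exact finishF S u v hS pB M hM b b' c c' hbb hcc γ hγ hc
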